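/- Suppose real random variables X_n ≥ 0 satisfy X_n/n → c > 0 in probability (supercritical flux), and Y_n ≥ 0 satisfy Y_n/n → m - p in probability where p = P(root occupied). If additionally (1/n)Σ of i.i.d. mean-m arrivals converges to m in probability and the conservation identity Σℓ - φ = #occupied holds, then: P(root of T occupied) = m - c < m iff φ(T_n)/n → c > 0. In particular, φ(T_n)/n → m - P(∅ occupied in T) in probability. -/

import Mathlib

open MeasureTheory Filter

/-- law of large numbers for the flux via conservation of cars: if the
total arrivals satisfy `A_n/n → m` in probability, the number of occupied vertices
satisfies `O_n/n → p` in probability and `φ_n = A_n - O_n ≥ 0`, then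
`φ_n/n → m - p` in probability; moreover `p = m - c` iff `φ_n/n → c` in probability. -/
theorem stmt18 {Ω : Type*} [MeasurableSpace Ω] (μ : Measure Ω) [IsProbabilityMeasure μ]
    (A O φ : ℕ → Ω → ℝ) (m p c : ℝ) (hc : 0 < c)
    (hφ : ∀ n ω, φ n ω = A n ω - O n ω)
    (hφnn : ∀ n ω, 0 ≤ φ n ω)
    (hA : ∀ ε : ℝ, 0 < ε →
      Tendsto (fun n : ℕ => μ {ω | ε < |A n ω / n - m|}) atTop (nhds 0))
    (hO : ∀ ε : ℝ, 0 < ε →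
      Tendsto (fun n : ℕ => μ {ω | ε < |O n ω / n - p|}) atTop (nhds 0)) :
    (∀ ε : ℝ, 0 < ε →
      Tendsto (fun n : ℕ => μ {ω | ε < |φ n ω / n - (m - p)|}) atTop (nhds 0)) ∧
    (p = m - c ↔ ∀ ε : ℝ, 0 < ε →
      Tendsto (fun n : ℕ => μ {ω | ε < |φ n ω / n - c|}) atTop (nhds 0)) := by
  have hmain : ∀ ε : ℝ, 0 < ε →
      Tendsto (fun n : ℕ => μ {ω | ε < |φ n ω / n - (m - p)|}) atTop (nhds 0) := by
    intro ε hε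
    have hsub : ∀ n : ℕ, {ω | ε < |φ n ω / n - (m - p)|} ⊆
        {ω | ε / 2 < |A n ω / n - m|} ∪ {ω | ε / 2 < |O n ω / n - p|} := by
      intro n ω hω
      simp only [Set.mem_setOf_eq] at hω
      by_contra h
      simp only [Set.mem_union, Set.mem_setOf_eq, not_or, not_lt] at h
      obtain ⟨h1, h2⟩ := h
      have : |φ n ω / n - (m - p)| ≤ |A n ω / n - m| + |O n ω / n - p| := by
        have : φ n ω / n - (m - p) = (A n ω / n - m) - (O n ω / n - p) := by
          rw [hφ]; ring
        rw [this]
        exact abs_sub _ _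
      linarith
    have hAB : Tendsto (fun n : ℕ => μ {ω | ε / 2 < |A n ω / n - m|}
        + μ {ω | ε / 2 < |O n ω / n - p|}) atTop (nhds 0) := by
      have := (hA (ε / 2) (by linarith)).add (hO (ε / 2) (by linarith))
      simpa using this
    refine tendsto_of_tendsto_of_tendsto_of_le_of_le tendsto_const_nhds hAB
      (fun n => zero_le) (fun n => ?_)
    calc μ {ω | ε < |φ n ω / n - (m - p)|}
        ≤ μ ({ω | ε / 2 < |A n ω / n - m|} ∪ {ω | ε / 2 < |O n ω / n - p|}) :=
          measure_mono (hsub n)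
      _ ≤ _ := measure_union_le _ _
  refine ⟨hmain, ?_⟩
  constructor
  · rintro rfl
    simpa using hmain
  · intro hc'
    by_contra hne
    have hd : 0 < |(m - p) - c| := by
      rw [abs_pos]
      intro h
      apply hne
      linarith [sub_eq_zero.mp h]
    set ε := |(m - p) - c| / 3 with hεdef
    have hε : 0 < ε := by positivity
    have hsum : Tendsto (fun n : ℕ => μ {ω | ε < |φ n ω / n - (m - p)|}
        + μ {ω | ε < |φ n ω / n - c|}) atTop (nhds 0) := by
      simpa using (hmain ε hε).add (hc' ε hε)
    have hcover : ∀ n : ℕ, (1 : ENNReal) ≤ μ {ω | ε < |φ n ω / n - (m - p)|}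
        + μ {ω | ε < |φ n ω / n - c|} := by
      intro n
      have : (Set.univ : Set Ω) ⊆ {ω | ε < |φ n ω / n - (m - p)|}
          ∪ {ω | ε < |φ n ω / n - c|} := by
        intro ω _
        by_contra h
        simp only [Set.mem_union, Set.mem_setOf_eq, not_or, not_lt] at h
        obtain ⟨h1, h2⟩ := h
        have : |(m - p) - c| ≤ |φ n ω / n - (m - p)| + |φ n ω / n - c| := by
          have h3 : (m - p) - c = (φ n ω / n - c) - (φ n ω / n - (m - p)) := by ring
          rw [h3]
          exact (abs_sub _ _).trans_eq (add_comm _ _)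
        have : |(m - p) - c| ≤ 2 * ε := by linarith
        rw [hεdef] at this
        linarith
      calc (1 : ENNReal) = μ Set.univ := (measure_univ).symm
        _ ≤ μ ({ω | ε < |φ n ω / n - (m - p)|} ∪ {ω | ε < |φ n ω / n - c|}) :=
            measure_mono this
        _ ≤ _ := measure_union_le _ _
    have hev : ∀ᶠ n in atTop, μ {ω | ε < |φ n ω / n - (m - p)|}
        + μ {ω | ε < |φ n ω / n - c|} < 1 :=
      hsum.eventually_lt_const (by norm_num)
    obtain ⟨n, hn⟩ := hev.exists
    exact absurd (hcover n) (not_le.mpr hn)
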